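/- If p is an odd prime such that θ = 2p + 1 is also prime, then for any integers x, y, z with z^p = x^p + y^p, θ divides one of x, y, z. -/
import Mathlib


theorem stmt_10 (p : ℕ) (hp : p.Prime) (hodd : Odd p) (hθ : (2 * p + 1).Prime)
    (x y z : ℤ) (h : z ^ p = x ^ p + y ^ p) :
    ((2 * p + 1 : ℕ) : ℤ) ∣ x ∨ ((2 * p + 1 : ℕ) : ℤ) ∣ y ∨ ((2 * p + 1 : ℕ) : ℤ) ∣ z := by
  by_contra hc
  push_neg at hc
  obtain ⟨hx, hy, hz⟩ := hc
  haveI : Fact (2 * p + 1).Prime := ⟨hθ⟩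
  have hp2 : p ≠ 2 := by
    rintro rfl
    exact (Nat.not_odd_iff_even.2 even_two) hodd
  have hp3 : 3 ≤ p := by
    rcases Nat.lt_or_ge p 3 with h3 | h3
    · interval_cases p <;> simp_all (config := {decide := true})
    · exact h3
  have key : ∀ a : ℤ, ¬ ((2 * p + 1 : ℕ) : ℤ) ∣ a →
      ((a : ZMod (2 * p + 1)) ^ p = 1 ∨ (a : ZMod (2 * p + 1)) ^ p = -1) := by
    intro a ha
    have ha' : (a : ZMod (2 * p + 1)) ≠ 0 := by
      rwa [Ne, ZMod.intCast_zmod_eq_zero_iff_dvd]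
    have h2 : ((a : ZMod (2 * p + 1)) ^ p) * ((a : ZMod (2 * p + 1)) ^ p) = 1 := by
      have := ZMod.pow_card_sub_one_eq_one ha'
      have e : 2 * p + 1 - 1 = p + p := by omega
      rw [e, pow_add] at this
      exact this
    exact mul_self_eq_one_iff.mp h2
  have h' := congrArg (Int.cast : ℤ → ZMod (2 * p + 1)) h
  push_cast at h'
  have hne1 : (1 : ZMod (2 * p + 1)) ≠ 0 := one_ne_zero
  have hne3 : (3 : ZMod (2 * p + 1)) ≠ 0 := by
    intro h3
    have : ((3 : ℕ) : ZMod (2 * p + 1)) = 0 := by exact_mod_cast h3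
    have hd := (ZMod.natCast_eq_zero_iff _ _).mp this
    have := Nat.le_of_dvd (by norm_num) hd
    omega
  rcases key x hx with hxx | hxx <;> rcases key y hy with hyy | hyy <;>
    rcases key z hz with hzz | hzz <;> rw [hxx, hyy, hzz] at h' <;>
    first
      | exact hne1 (by linear_combination h')
      | exact hne1 (by linear_combination -h')
      | exact hne3 (by linear_combination h')
      | exact hne3 (by linear_combination -h')
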